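/- For every ε > 0 there exists a constant C = C(ε) such that the following holds for every n, every 3-uniform hypergraph H on n vertices, and every matching M of maximum size in H: the number of vertices v ∈ V(H) \ V(M) for which there are at least εn² pairs {E,F} of distinct edges of M such that L_v(EF) contains a perfect matching is at most C. -/

import Mathlib

open Finset


lemma good3 : ∀ p q r : Equiv.Perm (Fin 3), (p = q ∧ q = r) ∨ (p ≠ q ∧ p ≠ r ∧ q ≠ r) →
    ∃ c1 c2 c3 : Fin 3, c1 ≠ c2 ∧ c1 ≠ c3 ∧ c2 ≠ c3 ∧
      p c1 ≠ q c2 ∧ p c1 ≠ r c3 ∧ q c2 ≠ r c3 := by decide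

lemma three_of_five {X : Type*} [DecidableEq X] (g : Fin 5 → X) :
    ∃ a b c : Fin 5, a ≠ b ∧ a ≠ c ∧ b ≠ c ∧
      ((g a = g b ∧ g b = g c) ∨ (g a ≠ g b ∧ g a ≠ g c ∧ g b ≠ g c)) := by
  by_cases h : 3 ≤ (Finset.univ.image g).card
  · -- three distinct values
    obtain ⟨x, hx, y, hy, z, hz, hxy, hxz, hyz⟩ := Finset.two_lt_card.mp h
    simp only [Finset.mem_image, Finset.mem_univ, true_and] at hx hy hz
    obtain ⟨a, rfl⟩ := hx; obtain ⟨b, rfl⟩ := hy; obtain ⟨c, rfl⟩ := hz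
    exact ⟨a, b, c, fun h => hxy (by rw [h]), fun h => hxz (by rw [h]),
      fun h => hyz (by rw [h]), Or.inr ⟨hxy, hxz, hyz⟩⟩
  · push_neg at h
    have hmaps : ∀ a ∈ (Finset.univ : Finset (Fin 5)), g a ∈ Finset.univ.image g := by
      intro a _; exact Finset.mem_image_of_mem g (Finset.mem_univ a)
    have hlt : (Finset.univ.image g).card * 2 < (Finset.univ : Finset (Fin 5)).card := by
      simp only [Finset.card_univ, Fintype.card_fin]
      omega
    obtain ⟨y, _, hy⟩ := Finset.exists_lt_card_fiber_of_mul_lt_card_of_maps_to hmaps hlt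
    obtain ⟨a, ha, b, hb, c, hc, hab, hac, hbc⟩ := Finset.two_lt_card.mp hy
    simp only [Finset.mem_filter] at ha hb hc
    exact ⟨a, b, c, hab, hac, hbc, Or.inl ⟨ha.2.trans hb.2.symm, hb.2.trans hc.2.symm⟩⟩

lemma rainbow5 {Vt : Type} [DecidableEq Vt] {E F : Finset Vt} (hE : E.card = 3) (hF : F.card = 3)
    (f : Fin 5 → Vt → Vt) (hf : ∀ i, Set.BijOn (f i) ↑E ↑F) :
    ∃ a b c : Fin 5, a ≠ b ∧ a ≠ c ∧ b ≠ c ∧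
      ∃ x ∈ E, ∃ y ∈ E, ∃ z ∈ E, x ≠ y ∧ x ≠ z ∧ y ≠ z ∧
        f a x ≠ f b y ∧ f a x ≠ f c z ∧ f b y ≠ f c z := by
  classical
  have eE : {v // v ∈ E} ≃ Fin 3 := E.equivFinOfCardEq hE
  have eF : {v // v ∈ F} ≃ Fin 3 := F.equivFinOfCardEq hF
  let q : ∀ i : Fin 5, {v // v ∈ E} ≃ {v // v ∈ F} := fun i => Set.BijOn.equiv (f i) (hf i)
  have hq : ∀ (i : Fin 5) (w : {v // v ∈ E}), ((q i w : Vt)) = f i (w : Vt) := fun i w => rfl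
  set g : Fin 5 → Equiv.Perm (Fin 3) := fun i => (eE.symm.trans (q i)).trans eF with hg
  obtain ⟨a, b, c, hab, hac, hbc, htriple⟩ := three_of_five g
  obtain ⟨c1, c2, c3, h12, h13, h23, hv12, hv13, hv23⟩ := good3 (g a) (g b) (g c) htriple
  refine ⟨a, b, c, hab, hac, hbc,
    (eE.symm c1 : Vt), (eE.symm c1).2, (eE.symm c2 : Vt), (eE.symm c2).2,
    (eE.symm c3 : Vt), (eE.symm c3).2, ?_, ?_, ?_, ?_, ?_, ?_⟩
  · exact fun h => h12 (by rw [← eE.apply_symm_apply c1, ← eE.apply_symm_apply c2,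
      Subtype.ext h])
  · exact fun h => h13 (by rw [← eE.apply_symm_apply c1, ← eE.apply_symm_apply c3,
      Subtype.ext h])
  · exact fun h => h23 (by rw [← eE.apply_symm_apply c2, ← eE.apply_symm_apply c3,
      Subtype.ext h])
  · intro h
    apply hv12
    show eF (q a (eE.symm c1)) = eF (q b (eE.symm c2))
    congr 1
    exact Subtype.ext (by rw [hq, hq]; exact h)
  · intro h
    apply hv13
    show eF (q a (eE.symm c1)) = eF (q c (eE.symm c3))
    congr 1
    exact Subtype.ext (by rw [hq, hq]; exact h)
  · intro h
    apply hv23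
    show eF (q b (eE.symm c2)) = eF (q c (eE.symm c3))
    congr 1
    exact Subtype.ext (by rw [hq, hq]; exact h)

lemma swap_dir {Vt : Type} [DecidableEq Vt] {E F : Finset Vt} {H : Finset (Finset Vt)}
    {v : Vt} {f : Vt → Vt} (hf : Set.BijOn f ↑F ↑E)
    (hH : ∀ a ∈ F, ({v, a, f a} : Finset Vt) ∈ H) :
    ∃ g : Vt → Vt, Set.BijOn g ↑E ↑F ∧ ∀ a ∈ E, ({v, a, g a} : Finset Vt) ∈ H := by
  have : Nonempty Vt := ⟨v⟩
  set g := Function.invFunOn f ↑F with hgdef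
  have hinv : Set.InvOn g f ↑F ↑E := hf.invOn_invFunOn
  refine ⟨g, Set.BijOn.symm hinv.symm hf, fun a ha => ?_⟩
  have hga : g a ∈ (↑F : Set Vt) := (Set.BijOn.symm hinv.symm hf).mapsTo ha
  have hfga : f (g a) = a := hinv.2 ha
  have := hH (g a) hga
  rw [hfga] at this
  have hpair : ({v, a, g a} : Finset Vt) = {v, g a, a} := by
    show insert v ({a, g a} : Finset Vt) = insert v {g a, a}
    rw [Finset.pair_comm]
  rw [hpair]
  exact this

lemma triple_disj {Vt : Type} [DecidableEq Vt] {a b c d e f : Vt}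
    (h1 : a ≠ d) (h2 : a ≠ e) (h3 : a ≠ f) (h4 : b ≠ d) (h5 : b ≠ e) (h6 : b ≠ f)
    (h7 : c ≠ d) (h8 : c ≠ e) (h9 : c ≠ f) :
    Disjoint ({a, b, c} : Finset Vt) {d, e, f} := by
  rw [Finset.disjoint_left]
  intro t ht ht'
  simp only [Finset.mem_insert, Finset.mem_singleton] at ht ht'
  rcases ht with rfl | rfl | rfl <;> rcases ht' with rfl | rfl | rfl <;> simp_all

lemma exchange {Vt : Type} [Fintype Vt] [DecidableEq Vt] {H M : Finset (Finset Vt)}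
    (hMH : M ⊆ H) (hdisj : (M : Set (Finset Vt)).PairwiseDisjoint id)
    (hmax : ∀ M' ⊆ H, (M' : Set (Finset Vt)).PairwiseDisjoint id → M'.card ≤ M.card)
    {E F : Finset Vt} (hEM : E ∈ M) (hFM : F ∈ M) (hEF : E ≠ F)
    {v1 v2 v3 x1 x2 x3 y1 y2 y3 : Vt}
    (hv1 : v1 ∉ M.biUnion id) (hv2 : v2 ∉ M.biUnion id) (hv3 : v3 ∉ M.biUnion id)
    (hv12 : v1 ≠ v2) (hv13 : v1 ≠ v3) (hv23 : v2 ≠ v3)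
    (hx1 : x1 ∈ E) (hx2 : x2 ∈ E) (hx3 : x3 ∈ E)
    (hx12 : x1 ≠ x2) (hx13 : x1 ≠ x3) (hx23 : x2 ≠ x3)
    (hy1 : y1 ∈ F) (hy2 : y2 ∈ F) (hy3 : y3 ∈ F)
    (hy12 : y1 ≠ y2) (hy13 : y1 ≠ y3) (hy23 : y2 ≠ y3)
    (hN1 : ({v1, x1, y1} : Finset Vt) ∈ H) (hN2 : ({v2, x2, y2} : Finset Vt) ∈ H)
    (hN3 : ({v3, x3, y3} : Finset Vt) ∈ H) : False := by
  classical
  -- basic facts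
  have hnotin : ∀ v : Vt, v ∉ M.biUnion id → ∀ G ∈ M, v ∉ G := by
    intro v hv G hG hvG
    exact hv (Finset.mem_biUnion.mpr ⟨G, hG, hvG⟩)
  have hEFd : Disjoint E F := hdisj hEM hFM hEF
  have hEFd' : ∀ x ∈ E, ∀ y ∈ F, x ≠ y := by
    intro x hx y hy h; exact Finset.disjoint_left.mp hEFd hx (h ▸ hy)
  set N1 : Finset Vt := {v1, x1, y1} with hN1def
  set N2 : Finset Vt := {v2, x2, y2} with hN2def
  set N3 : Finset Vt := {v3, x3, y3} with hN3def
  have hmemN : ∀ t : Vt, ∀ v x y : Vt, t ∈ ({v, x, y} : Finset Vt) → t = v ∨ t = x ∨ t = y := by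
    intro t v x y ht
    simpa only [Finset.mem_insert, Finset.mem_singleton] using ht
  -- disjointness of new triples with old edges
  have hNold : ∀ (v x y : Vt), v ∉ M.biUnion id → x ∈ E → y ∈ F →
      ∀ G ∈ M, G ≠ E → G ≠ F → Disjoint ({v, x, y} : Finset Vt) G := by
    intro v x y hv hx hy G hG hGE hGF
    rw [Finset.disjoint_left]
    intro t ht htG
    rcases hmemN t v x y ht with rfl | rfl | rfl
    · exact hnotin t hv G hG htG
    · exact Finset.disjoint_left.mp (hdisj hEM hG (Ne.symm hGE)) hx htG
    · exact Finset.disjoint_left.mp (hdisj hFM hG (Ne.symm hGF)) hy htG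
  have hvE : ∀ (v : Vt), v ∉ M.biUnion id → ∀ x ∈ E, v ≠ x := by
    intro v hv x hx h; exact hnotin v hv E hEM (h ▸ hx)
  have hvF : ∀ (v : Vt), v ∉ M.biUnion id → ∀ y ∈ F, v ≠ y := by
    intro v hv y hy h; exact hnotin v hv F hFM (h ▸ hy)
  -- pairwise disjointness of new triples
  have hd12 : Disjoint N1 N2 := triple_disj hv12 (hvE v1 hv1 x2 hx2) (hvF v1 hv1 y2 hy2)
    (Ne.symm (hvE v2 hv2 x1 hx1)) hx12 (hEFd' x1 hx1 y2 hy2)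
    (Ne.symm (hvF v2 hv2 y1 hy1)) (Ne.symm (hEFd' x2 hx2 y1 hy1)) hy12
  have hd13 : Disjoint N1 N3 := triple_disj hv13 (hvE v1 hv1 x3 hx3) (hvF v1 hv1 y3 hy3)
    (Ne.symm (hvE v3 hv3 x1 hx1)) hx13 (hEFd' x1 hx1 y3 hy3)
    (Ne.symm (hvF v3 hv3 y1 hy1)) (Ne.symm (hEFd' x3 hx3 y1 hy1)) hy13
  have hd23 : Disjoint N2 N3 := triple_disj hv23 (hvE v2 hv2 x3 hx3) (hvF v2 hv2 y3 hy3)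
    (Ne.symm (hvE v3 hv3 x2 hx2)) hx23 (hEFd' x2 hx2 y3 hy3)
    (Ne.symm (hvF v3 hv3 y2 hy2)) (Ne.symm (hEFd' x3 hx3 y2 hy2)) hy23
  -- new triples are not in M
  have hNnotM : ∀ (v x y : Vt), v ∉ M.biUnion id → ({v, x, y} : Finset Vt) ∉ M := by
    intro v x y hv hmem
    exact hnotin v hv _ hmem (by simp)
  -- the new matching
  set M'' : Finset (Finset Vt) := (M.erase E).erase F with hM''def
  have hM''M : M'' ⊆ M := (Finset.erase_subset _ _).trans (Finset.erase_subset _ _)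
  have hGn : ∀ G ∈ M'', G ∈ M ∧ G ≠ E ∧ G ≠ F := by
    intro G hG
    have h1 := Finset.mem_of_mem_erase hG
    exact ⟨hM''M hG, Finset.ne_of_mem_erase h1, Finset.ne_of_mem_erase hG⟩
  set M' : Finset (Finset Vt) := insert N1 (insert N2 (insert N3 M'')) with hM'def
  have hmemM' : ∀ A ∈ M', A = N1 ∨ A = N2 ∨ A = N3 ∨ A ∈ M'' := by
    intro A hA
    rw [hM'def] at hA
    simpa only [Finset.mem_insert] using hA
  -- M' ⊆ H
  have hM'H : M' ⊆ H := by
    intro A hA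
    rcases hmemM' A hA with rfl | rfl | rfl | h
    · exact hN1
    · exact hN2
    · exact hN3
    · exact hMH (hM''M h)
  -- pairwise disjoint
  have hM'disj : (M' : Set (Finset Vt)).PairwiseDisjoint id := by
    intro A hA B hB hAB
    have hA' := hmemM' A hA
    have hB' := hmemM' B hB
    have key : ∀ P Q : Finset Vt, (P = N1 ∨ P = N2 ∨ P = N3 ∨ P ∈ M'') →
        (Q = N1 ∨ Q = N2 ∨ Q = N3 ∨ Q ∈ M'') → P ≠ Q → Disjoint P Q := by
      intro P Q hP hQ hPQ
      rcases hP with rfl | rfl | rfl | hP <;> rcases hQ with rfl | rfl | rfl | hQ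
      · exact absurd rfl hPQ
      · exact hd12
      · exact hd13
      · exact hNold v1 x1 y1 hv1 hx1 hy1 Q (hGn Q hQ).1 (hGn Q hQ).2.1 (hGn Q hQ).2.2
      · exact hd12.symm
      · exact absurd rfl hPQ
      · exact hd23
      · exact hNold v2 x2 y2 hv2 hx2 hy2 Q (hGn Q hQ).1 (hGn Q hQ).2.1 (hGn Q hQ).2.2
      · exact hd13.symm
      · exact hd23.symm
      · exact absurd rfl hPQ
      · exact hNold v3 x3 y3 hv3 hx3 hy3 Q (hGn Q hQ).1 (hGn Q hQ).2.1 (hGn Q hQ).2.2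
      · exact (hNold v1 x1 y1 hv1 hx1 hy1 P (hGn P hP).1 (hGn P hP).2.1 (hGn P hP).2.2).symm
      · exact (hNold v2 x2 y2 hv2 hx2 hy2 P (hGn P hP).1 (hGn P hP).2.1 (hGn P hP).2.2).symm
      · exact (hNold v3 x3 y3 hv3 hx3 hy3 P (hGn P hP).1 (hGn P hP).2.1 (hGn P hP).2.2).symm
      · exact hdisj (hM''M hP) (hM''M hQ) hPQ
    exact key A B hA' hB' hAB
  -- cardinality
  have hv1N2 : v1 ∉ N2 := by
    intro h
    rcases hmemN v1 v2 x2 y2 h with h' | h' | h'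
    · exact hv12 h'
    · exact hvE v1 hv1 x2 hx2 h'
    · exact hvF v1 hv1 y2 hy2 h'
  have hv1N3 : v1 ∉ N3 := by
    intro h
    rcases hmemN v1 v3 x3 y3 h with h' | h' | h'
    · exact hv13 h'
    · exact hvE v1 hv1 x3 hx3 h'
    · exact hvF v1 hv1 y3 hy3 h'
  have hv2N3 : v2 ∉ N3 := by
    intro h
    rcases hmemN v2 v3 x3 y3 h with h' | h' | h'
    · exact hv23 h'
    · exact hvE v2 hv2 x3 hx3 h'
    · exact hvF v2 hv2 y3 hy3 h'
  have hN12 : N1 ≠ N2 := fun h => hv1N2 (h ▸ Finset.mem_insert_self v1 {x1, y1})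
  have hN13 : N1 ≠ N3 := fun h => hv1N3 (h ▸ Finset.mem_insert_self v1 {x1, y1})
  have hN23 : N2 ≠ N3 := fun h => hv2N3 (h ▸ Finset.mem_insert_self v2 {x2, y2})
  have hN1M'' : N1 ∉ M'' := fun h => hNnotM v1 x1 y1 hv1 (hM''M h)
  have hN2M'' : N2 ∉ M'' := fun h => hNnotM v2 x2 y2 hv2 (hM''M h)
  have hN3M'' : N3 ∉ M'' := fun h => hNnotM v3 x3 y3 hv3 (hM''M h)
  have hFE : F ∈ M.erase E := Finset.mem_erase.mpr ⟨Ne.symm hEF, hFM⟩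
  have hcard'' : M''.card = M.card - 2 := by
    rw [hM''def, Finset.card_erase_of_mem hFE, Finset.card_erase_of_mem hEM]
    omega
  have hMcard : 2 ≤ M.card := Finset.one_lt_card.mpr ⟨E, hEM, F, hFM, hEF⟩
  have hcard' : M'.card = M.card + 1 := by
    rw [hM'def, Finset.card_insert_of_notMem, Finset.card_insert_of_notMem,
      Finset.card_insert_of_notMem hN3M'', hcard'']
    · omega
    · simp only [Finset.mem_insert]
      push_neg
      exact ⟨hN23, hN2M''⟩
    · simp only [Finset.mem_insert]
      push_neg
      exact ⟨hN12, hN13, hN1M''⟩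
  have := hmax M' hM'H hM'disj
  omega

lemma per_pair {Vt : Type} [Fintype Vt] [DecidableEq Vt] {H M : Finset (Finset Vt)}
    (hH3 : ∀ e ∈ H, e.card = 3) (hMH : M ⊆ H)
    (hdisj : (M : Set (Finset Vt)).PairwiseDisjoint id)
    (hmax : ∀ M' ⊆ H, (M' : Set (Finset Vt)).PairwiseDisjoint id → M'.card ≤ M.card)
    {E F : Finset Vt} (hEM : E ∈ M) (hFM : F ∈ M) (hEF : E ≠ F)
    (s : Finset Vt)
    (hs : ∀ v ∈ s, v ∉ M.biUnion id ∧ ∃ f : Vt → Vt, Set.BijOn f ↑E ↑F ∧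
      ∀ a ∈ E, ({v, a, f a} : Finset Vt) ∈ H) :
    s.card ≤ 4 := by
  by_contra hlt
  push_neg at hlt
  obtain ⟨t, hts, ht5⟩ := Finset.exists_subset_card_eq (s := s) (n := 5) (by omega)
  let e : {v // v ∈ t} ≃ Fin 5 := t.equivFinOfCardEq ht5
  set w : Fin 5 → Vt := fun i => ((e.symm i : {v // v ∈ t}) : Vt) with hw
  have hwinj : Function.Injective w := by
    intro i j h
    have := Subtype.ext (p := fun v => v ∈ t) h
    simpa using congrArg e this
  have hwmem : ∀ i, w i ∈ s := fun i => hts (e.symm i).2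
  choose f hbij hedge using fun i : Fin 5 => (hs (w i) (hwmem i)).2
  have hnc : ∀ i : Fin 5, w i ∉ M.biUnion id := fun i => (hs (w i) (hwmem i)).1
  have hE3 : E.card = 3 := hH3 E (hMH hEM)
  have hF3 : F.card = 3 := hH3 F (hMH hFM)
  obtain ⟨a, b, c, hab, hac, hbc, x, hx, y, hy, z, hz, hxy, hxz, hyz, hv12, hv13, hv23⟩ :=
    rainbow5 hE3 hF3 f hbij
  exact exchange hMH hdisj hmax hEM hFM hEF (hnc a) (hnc b) (hnc c)
    (fun h => hab (hwinj h)) (fun h => hac (hwinj h)) (fun h => hbc (hwinj h))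
    hx hy hz hxy hxz hyz
    ((hbij a).mapsTo hx) ((hbij b).mapsTo hy) ((hbij c).mapsTo hz)
    hv12 hv13 hv23
    (hedge a x hx) (hedge b y hy) (hedge c z hz)

/-- For every `ε > 0` there is a constant `C` such that for every
3-uniform hypergraph `H` on `n` vertices and every maximum matching `M` in `H`, at most
`C` uncovered vertices `v` admit at least `εn²` unordered pairs `{E,F}` of distinct edges
of `M` whose link graph `L_v(EF)` contains a perfect matching. -/
theorem stmt_12 (ε : ℝ) (hε : 0 < ε) :
    ∃ C : ℕ, ∀ (Vt : Type) [Fintype Vt] [DecidableEq Vt] (H : Finset (Finset Vt)),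
      (∀ e ∈ H, e.card = 3) →
      ∀ M ⊆ H, (M : Set (Finset Vt)).PairwiseDisjoint id →
      (∀ M' ⊆ H, (M' : Set (Finset Vt)).PairwiseDisjoint id → M'.card ≤ M.card) →
      {v : Vt | v ∉ M.biUnion id ∧
        ε * (Fintype.card Vt : ℝ)^2 ≤
          (({S : Finset (Finset Vt) | S ⊆ M ∧ S.card = 2 ∧
            ∃ E ∈ S, ∃ F ∈ S, E ≠ F ∧
              ∃ f : Vt → Vt, Set.BijOn f ↑E ↑F ∧
                ∀ a ∈ E, ({v, a, f a} : Finset Vt) ∈ H}.ncard : ℝ))}.ncard ≤ C := by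
  refine ⟨⌈ε⁻¹⌉₊, ?_⟩
  intro Vt _ _ H hH3 M hMH hdisj hmax
  classical
  set n := Fintype.card Vt with hn
  set pred : Vt → Finset (Finset Vt) → Prop := fun v S =>
    ∃ E ∈ S, ∃ F ∈ S, E ≠ F ∧ ∃ f : Vt → Vt, Set.BijOn f ↑E ↑F ∧
      ∀ a ∈ E, ({v, a, f a} : Finset Vt) ∈ H with hpred
  set B : Set Vt := {v : Vt | v ∉ M.biUnion id ∧
      ε * (n : ℝ)^2 ≤
        (({S : Finset (Finset Vt) | S ⊆ M ∧ S.card = 2 ∧ pred v S}.ncard : ℝ))} with hB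
  have hBfin : B.Finite := Set.toFinite _
  rw [Set.ncard_eq_toFinset_card _ hBfin]
  set Bf : Finset Vt := hBfin.toFinset with hBf
  set Q : Vt → Finset (Finset (Finset Vt)) := fun v => (M.powersetCard 2).filter (pred v) with hQ
  -- Step A
  have stepA : ∀ v ∈ Bf, ε * (n : ℝ)^2 ≤ ((Q v).card : ℝ) := by
    intro v hv
    rw [Set.Finite.mem_toFinset] at hv
    have hv2 := hv.2
    have hPQ : {S : Finset (Finset Vt) | S ⊆ M ∧ S.card = 2 ∧ pred v S} = ↑(Q v) := by
      ext S
      simp only [Set.mem_setOf_eq, hQ, Finset.coe_filter, Finset.mem_powersetCard,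
        Set.mem_setOf_eq]
      constructor
      · rintro ⟨h1, h2, h3⟩; exact ⟨⟨h1, h2⟩, h3⟩
      · rintro ⟨⟨h1, h2⟩, h3⟩; exact ⟨h1, h2, h3⟩
    rwa [hPQ, Set.ncard_coe_finset] at hv2
  -- Step B
  have perS : ∀ S ∈ M.powersetCard 2, (Bf.filter (fun v => pred v S)).card ≤ 4 := by
    intro S hS
    obtain ⟨hSM, hS2⟩ := Finset.mem_powersetCard.mp hS
    obtain ⟨E, F, hEF, rfl⟩ := Finset.card_eq_two.mp hS2
    have hEM : E ∈ M := hSM (Finset.mem_insert_self E {F})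
    have hFM : F ∈ M := hSM (by simp)
    refine per_pair hH3 hMH hdisj hmax hEM hFM hEF _ ?_
    intro v hv
    rw [Finset.mem_filter] at hv
    obtain ⟨hvBf, hp⟩ := hv
    rw [Set.Finite.mem_toFinset] at hvBf
    refine ⟨hvBf.1, ?_⟩
    obtain ⟨E', hE', F', hF', hEF', f, hbij, hedge⟩ := hp
    simp only [Finset.mem_insert, Finset.mem_singleton] at hE' hF'
    rcases hE' with rfl | rfl <;> rcases hF' with rfl | rfl
    · exact absurd rfl hEF'
    · exact ⟨f, hbij, hedge⟩
    · exact swap_dir hbij hedge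
    · exact absurd rfl hEF'
  have stepB : (∑ v ∈ Bf, (Q v).card) ≤ n^2 := by
    have hswap : (∑ v ∈ Bf, (Q v).card) =
        ∑ S ∈ M.powersetCard 2, (Bf.filter (fun v => pred v S)).card := by
      simp only [hQ, Finset.card_filter]
      exact Finset.sum_comm
    have h1 : (∑ v ∈ Bf, (Q v).card) ≤ (M.powersetCard 2).card * 4 := by
      rw [hswap]
      calc ∑ S ∈ M.powersetCard 2, (Bf.filter (fun v => pred v S)).card
          ≤ ∑ _S ∈ M.powersetCard 2, 4 := Finset.sum_le_sum perS
        _ = (M.powersetCard 2).card * 4 := by rw [Finset.sum_const, smul_eq_mul]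
    have hm : 3 * M.card ≤ n := by
      have hcb : (M.biUnion id).card = ∑ e ∈ M, (id e).card :=
        Finset.card_biUnion (fun x hx y hy hxy => hdisj hx hy hxy)
      have hsum : ∑ e ∈ M, (id e).card = 3 * M.card := by
        calc ∑ e ∈ M, (id e).card = ∑ _e ∈ M, 3 :=
              Finset.sum_congr rfl (fun e he => by simpa using hH3 e (hMH he))
          _ = 3 * M.card := by rw [Finset.sum_const, smul_eq_mul, Nat.mul_comm]
      have hle : (M.biUnion id).card ≤ n := by
        rw [hn]
        exact (Finset.card_le_univ _).trans (le_of_eq (Finset.card_univ))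
      omega
    have hchoose : (M.powersetCard 2).card ≤ M.card * M.card := by
      rw [Finset.card_powersetCard, Nat.choose_two_right]
      exact (Nat.div_le_self _ 2).trans (Nat.mul_le_mul_left _ (Nat.sub_le _ _))
    calc (∑ v ∈ Bf, (Q v).card) ≤ (M.powersetCard 2).card * 4 := h1
      _ ≤ M.card * M.card * 4 := Nat.mul_le_mul_right _ hchoose
      _ ≤ (3 * M.card) * (3 * M.card) := by ring_nf; nlinarith [Nat.zero_le (M.card * M.card)]
      _ ≤ n * n := Nat.mul_le_mul hm hm
      _ = n ^ 2 := (sq n).symm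
  -- Step C
  rcases Nat.eq_zero_or_pos n with hn0 | hn0
  · have : Bf.card ≤ n := by
      rw [hn]
      exact (Finset.card_le_univ _).trans (le_of_eq (Finset.card_univ))
    omega
  · have hnR : (0 : ℝ) < (n : ℝ)^2 := by positivity
    have hmain : (Bf.card : ℝ) * (ε * (n : ℝ)^2) ≤ (n : ℝ)^2 := by
      calc (Bf.card : ℝ) * (ε * (n : ℝ)^2) = ∑ _v ∈ Bf, ε * (n : ℝ)^2 := by
            rw [Finset.sum_const, nsmul_eq_mul]
        _ ≤ ∑ v ∈ Bf, ((Q v).card : ℝ) := Finset.sum_le_sum stepA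
        _ = ((∑ v ∈ Bf, (Q v).card : ℕ) : ℝ) := by rw [Nat.cast_sum]
        _ ≤ ((n^2 : ℕ) : ℝ) := Nat.cast_le.mpr stepB
        _ = (n : ℝ)^2 := by push_cast; ring
    have hfinal : (Bf.card : ℝ) ≤ ε⁻¹ := by
      have hpos' : (0 : ℝ) < ε * (n : ℝ)^2 := by positivity
      have := (le_div_iff₀ hpos').mpr hmain
      have heq : (n : ℝ)^2 / (ε * (n : ℝ)^2) = ε⁻¹ := by
        field_simp
      rwa [heq] at this
    have : (Bf.card : ℝ) ≤ (⌈ε⁻¹⌉₊ : ℝ) := hfinal.trans (Nat.le_ceil _)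
    exact_mod_cast this
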